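/- The group presented by ⟨t_1, t_2, t_3 | t_i^2 = (t_1 t_2)^3 = (t_2 t_3)^3 = (t_1 t_3)^3 = (t_1 t_2 t_3 t_2)^2 = e⟩ is isomorphic to the symmetric group Sym_4 (the Weyl group of type A_3). -/

import Mathlib

namespace Stmt2

/-- The relators of the group `⟨t₁,t₂,t₃ ∣ tᵢ² = (t₁t₂)³ = (t₂t₃)³ = (t₁t₃)³ =
(t₁·t₂t₃t₂)² = e⟩`. -/
def rels : Set (FreeGroup (Fin 3)) :=
  let a := FreeGroup.of (0 : Fin 3)
  let b := FreeGroup.of (1 : Fin 3)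
  let c := FreeGroup.of (2 : Fin 3)
  {a ^ 2, b ^ 2, c ^ 2, (a * b) ^ 3, (b * c) ^ 3, (a * c) ^ 3, (a * (b * c * b)) ^ 2}

/-- The group `⟨t₁,t₂,t₃ ∣ tᵢ² = (t₁t₂)³ = (t₂t₃)³ = (t₁t₃)³ = (t₁·t₂t₃t₂)² = e⟩`
is isomorphic to the symmetric group `Sym₄`, the Weyl group of type `A₃`. -/


abbrev G := PresentedGroup rels
def a : G := PresentedGroup.of 0
def b : G := PresentedGroup.of 1
def c : G := PresentedGroup.of 2

theorem rel_one {r : FreeGroup (Fin 3)} (hr : r ∈ rels) : PresentedGroup.mk rels r = 1 :=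
  (QuotientGroup.eq_one_iff r).mpr (Subgroup.subset_normalClosure hr)

theorem r_aa : a * a = 1 := by
  have h := rel_one (r := FreeGroup.of (0:Fin 3) ^ 2) (by simp [rels])
  rw [pow_two, map_mul] at h
  exact h
theorem r_bb : b * b = 1 := by
  have h := rel_one (r := FreeGroup.of (1:Fin 3) ^ 2) (by simp [rels])
  rw [pow_two, map_mul] at h
  exact h
theorem r_cc : c * c = 1 := by
  have h := rel_one (r := FreeGroup.of (2:Fin 3) ^ 2) (by simp [rels])
  rw [pow_two, map_mul] at h
  exact h

theorem w_aa (x : G) : a * (a * x) = x := by rw [← mul_assoc, r_aa, one_mul]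
theorem w_bb (x : G) : b * (b * x) = x := by rw [← mul_assoc, r_bb, one_mul]
theorem w_cc (x : G) : c * (c * x) = x := by rw [← mul_assoc, r_cc, one_mul]

private theorem braid_aux {M : Type*} [Group M] {x y : M} (hx : x * x = 1) (hy : y * y = 1)
    (h : (x * y) ^ 3 = 1) : y * (x * y) = x * (y * x) := by
  have hx' : x⁻¹ = x := inv_eq_of_mul_eq_one_right hx
  have hy' : y⁻¹ = y := inv_eq_of_mul_eq_one_right hy
  have h2 : (x * y) * (x * y) = (x * y)⁻¹ := by
    rw [eq_inv_iff_mul_eq_one, show (x*y)*(x*y)*(x*y) = (x*y)^3 from by rw [pow_succ, pow_two], h]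
  rw [mul_inv_rev, hx', hy'] at h2
  have h3 : x * (y * (x * y)) = y * x := by rw [← mul_assoc]; exact h2
  calc y * (x * y) = x * (x * (y * (x * y))) := by rw [← mul_assoc x x, hx, one_mul]
  _ = x * (y * x) := by rw [h3]

theorem pg3 {i j : Fin 3} (h : (FreeGroup.of i * FreeGroup.of j) ^ 3 ∈ rels) :
    ((PresentedGroup.of i : G) * PresentedGroup.of j) ^ 3 = 1 := by
  simpa [PresentedGroup.of] using rel_one h

theorem r_bab : b * (a * b) = a * (b * a) :=
  braid_aux r_aa r_bb (pg3 (by simp [rels]))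
theorem r_cac : c * (a * c) = a * (c * a) :=
  braid_aux r_aa r_cc (pg3 (by simp [rels]))
theorem r_cbc : c * (b * c) = b * (c * b) :=
  braid_aux r_bb r_cc (pg3 (by simp [rels]))

theorem r_bcba : b * (c * (b * a)) = a * (b * (c * b)) := by
  have hz : (b * (c * b)) * (b * (c * b)) = 1 := by
    simp only [mul_assoc, w_bb, w_cc, r_bb]
  have h0 : (a * (b * (c * b))) * (a * (b * (c * b))) = 1 := by
    have := rel_one (r := (FreeGroup.of (0:Fin 3) * (FreeGroup.of 1 * FreeGroup.of 2 * FreeGroup.of 1)) ^ 2)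
      (by simp [rels])
    simpa [pow_two, mul_assoc, a, b, c, PresentedGroup.of] using this
  -- a and z := b*(c*b) commute, both involutions
  have hcomm : a * (b * (c * b)) = (b * (c * b)) * a := by
    have h1 : (a * (b * (c * b)))⁻¹ = a * (b * (c * b)) := inv_eq_of_mul_eq_one_right h0
    have h2 : (b * (c * b))⁻¹ = b * (c * b) := inv_eq_of_mul_eq_one_right hz
    have h3 : a⁻¹ = a := inv_eq_of_mul_eq_one_right r_aa
    calc a * (b * (c * b)) = (a * (b * (c * b)))⁻¹ := h1.symm
    _ = (b * (c * b))⁻¹ * a⁻¹ := by rw [mul_inv_rev]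
    _ = (b * (c * b)) * a := by rw [h2, h3]
  calc b * (c * (b * a)) = (b * (c * b)) * a := by rw [mul_assoc, mul_assoc]
  _ = a * (b * (c * b)) := hcomm.symm

theorem w_bab (x : G) : b * (a * (b * x)) = a * (b * (a * x)) := by
  simpa only [mul_assoc] using congrArg (· * x) r_bab
theorem w_cac (x : G) : c * (a * (c * x)) = a * (c * (a * x)) := by
  simpa only [mul_assoc] using congrArg (· * x) r_cac
theorem w_cbc (x : G) : c * (b * (c * x)) = b * (c * (b * x)) := by
  simpa only [mul_assoc] using congrArg (· * x) r_cbc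
theorem w_bcba (x : G) : b * (c * (b * (a * x))) = a * (b * (c * (b * x))) := by
  simpa only [mul_assoc] using congrArg (· * x) r_bcba

theorem r_bcab : b * (c * (a * b)) = a * (b * (c * a)) := by
  conv_lhs => rw [show a * b = b * (b * (a * b)) from (w_bb _).symm]
  rw [r_bab, w_bcba, w_bb]

theorem w_bcab (x : G) : b * (c * (a * (b * x))) = a * (b * (c * (a * x))) := by
  simpa only [mul_assoc] using congrArg (· * x) r_bcab

theorem r_cabc : c * (a * (b * c)) = a * (b * (c * a)) := by
  conv_lhs => rw [show b * c = c * (c * (b * c)) from (w_cc _).symm]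
  rw [w_cac, r_cbc, ← r_bcba, w_cbc, w_bb]

theorem w_cabc (x : G) : c * (a * (b * (c * x))) = a * (b * (c * (a * x))) := by
  simpa only [mul_assoc] using congrArg (· * x) r_cabc

theorem r_cbac : c * (b * (a * c)) = a * (c * (b * a)) := by
  conv_lhs => rw [show a * c = c * (c * (a * c)) from (w_cc _).symm]
  rw [w_cbc, r_cac, w_bcba, w_cbc, w_bb]

theorem w_cbac (x : G) : c * (b * (a * (c * x))) = a * (c * (b * (a * x))) := by
  simpa only [mul_assoc] using congrArg (· * x) r_cbac

theorem r_baca : b * (a * (c * a)) = a * (c * (a * b)) := by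
  symm
  conv_lhs => rw [show (b : G) = b * (c * c) from by rw [r_cc, mul_one]]
  rw [w_cabc, w_aa, r_cac]

theorem w_baca (x : G) : b * (a * (c * (a * x))) = a * (c * (a * (b * x))) := by
  simpa only [mul_assoc] using congrArg (· * x) r_baca

theorem r_bacb : b * (a * (c * b)) = a * (c * (b * a)) := by
  conv_lhs => rw [show c * b = c * (a * (a * b)) from by rw [w_aa]]
  rw [w_baca, r_bab, w_aa]

theorem w_bacb (x : G) : b * (a * (c * (b * x))) = a * (c * (b * (a * x))) := by
  simpa only [mul_assoc] using congrArg (· * x) r_bacb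

theorem r_caba : c * (a * (b * a)) = a * (b * (a * c)) := by
  conv_lhs => rw [← r_bab]
  conv_lhs => rw [show a * b = c * (c * (a * b)) from (w_cc _).symm]
  rw [w_cbc, r_bcab, w_bcab, w_cac, r_aa, mul_one]

theorem w_caba (x : G) : c * (a * (b * (a * x))) = a * (b * (a * (c * x))) := by
  simpa only [mul_assoc] using congrArg (· * x) r_caba

def LL : List G := [1, a, b, c, a*b, a*c, b*a, b*c, c*a, c*b,
  a*(b*a), a*(b*c), a*(c*a), a*(c*b), b*(a*c), b*(c*a), b*(c*b), c*(a*b), c*(b*a),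
  a*(b*(a*c)), a*(b*(c*a)), a*(b*(c*b)), a*(c*(a*b)), a*(c*(b*a))]

theorem of0 : (PresentedGroup.of 0 : G) = a := rfl
theorem of1 : (PresentedGroup.of 1 : G) = b := rfl
theorem of2 : (PresentedGroup.of 2 : G) = c := rfl

set_option maxHeartbeats 2000000 in
theorem stepa : ∀ y ∈ LL, a * y ∈ LL := by
  intro y hy
  simp only [LL, List.mem_cons, List.not_mem_nil, or_false] at hy
  rcases hy with rfl|rfl|rfl|rfl|rfl|rfl|rfl|rfl|rfl|rfl|rfl|rfl|rfl|rfl|rfl|rfl|rfl|rfl|rfl|rfl|rfl|rfl|rfl|rfl <;>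
  · simp only [LL, List.mem_cons, mul_one, one_mul, mul_assoc, w_aa, w_bb, w_cc, w_bab, w_cac,
      w_cbc, w_bcba, w_baca, w_bacb, w_bcab, w_caba, w_cabc, w_cbac, r_aa, r_bb, r_cc, r_bab,
      r_cac, r_cbc, r_bcba, r_baca, r_bacb, r_bcab, r_caba, r_cabc, r_cbac]
    tauto

set_option maxHeartbeats 2000000 in
theorem stepb : ∀ y ∈ LL, b * y ∈ LL := by
  intro y hy
  simp only [LL, List.mem_cons, List.not_mem_nil, or_false] at hy
  rcases hy with rfl|rfl|rfl|rfl|rfl|rfl|rfl|rfl|rfl|rfl|rfl|rfl|rfl|rfl|rfl|rfl|rfl|rfl|rfl|rfl|rfl|rfl|rfl|rfl <;>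
  · simp only [LL, List.mem_cons, mul_one, one_mul, mul_assoc, w_aa, w_bb, w_cc, w_bab, w_cac,
      w_cbc, w_bcba, w_baca, w_bacb, w_bcab, w_caba, w_cabc, w_cbac, r_aa, r_bb, r_cc, r_bab,
      r_cac, r_cbc, r_bcba, r_baca, r_bacb, r_bcab, r_caba, r_cabc, r_cbac]
    tauto

set_option maxHeartbeats 2000000 in
theorem stepc : ∀ y ∈ LL, c * y ∈ LL := by
  intro y hy
  simp only [LL, List.mem_cons, List.not_mem_nil, or_false] at hy
  rcases hy with rfl|rfl|rfl|rfl|rfl|rfl|rfl|rfl|rfl|rfl|rfl|rfl|rfl|rfl|rfl|rfl|rfl|rfl|rfl|rfl|rfl|rfl|rfl|rfl <;>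
  · simp only [LL, List.mem_cons, mul_one, one_mul, mul_assoc, w_aa, w_bb, w_cc, w_bab, w_cac,
      w_cbc, w_bcba, w_baca, w_bacb, w_bcab, w_caba, w_cabc, w_cbac, r_aa, r_bb, r_cc, r_bab,
      r_cac, r_cbc, r_bcba, r_baca, r_bacb, r_bcab, r_caba, r_cabc, r_cbac]
    tauto

theorem step : ∀ i : Fin 3, ∀ y ∈ LL, (PresentedGroup.of i : G) * y ∈ LL := by
  intro i
  fin_cases i
  · exact stepa
  · exact stepb
  · exact stepc

theorem inv_of (i : Fin 3) : (PresentedGroup.of i : G)⁻¹ = PresentedGroup.of i := by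
  fin_cases i
  · exact inv_eq_of_mul_eq_one_right r_aa
  · exact inv_eq_of_mul_eq_one_right r_bb
  · exact inv_eq_of_mul_eq_one_right r_cc

theorem all_mem (g : G) : g ∈ LL := by
  have hg : g ∈ Subgroup.closure (Set.range (PresentedGroup.of : Fin 3 → G)) := by
    rw [PresentedGroup.closure_range_of]; trivial
  refine Subgroup.closure_induction_left ?_ ?_ ?_ hg
  · simp [LL]
  · rintro x ⟨i, rfl⟩ y _ hy
    exact step i y hy
  · rintro x ⟨i, rfl⟩ y _ hy
    rw [inv_of]
    exact step i y hy

theorem surjLL : Function.Surjective (fun i : Fin LL.length => LL.get i) := by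
  intro g
  obtain ⟨n, hn⟩ := List.mem_iff_get.mp (all_mem g)
  exact ⟨n, hn⟩

instance : Finite G := Finite.of_surjective _ surjLL

theorem cardG_le : Nat.card G ≤ 24 := by
  have := Nat.card_le_card_of_surjective _ surjLL
  simpa [LL] using this

def f : Fin 3 → Equiv.Perm (Fin 4) := ![Equiv.swap 0 2, Equiv.swap 1 2, Equiv.swap 2 3]

theorem hf : ∀ r ∈ rels, FreeGroup.lift f r = 1 := by
  intro r hr
  simp only [rels, Set.mem_insert_iff, Set.mem_singleton_iff] at hr
  rcases hr with rfl|rfl|rfl|rfl|rfl|rfl|rfl <;>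
    simp only [map_pow, map_mul, FreeGroup.lift_apply_of] <;> decide

def phi : G →* Equiv.Perm (Fin 4) := PresentedGroup.toGroup hf

theorem phi_of (i : Fin 3) : phi (PresentedGroup.of i) = f i := PresentedGroup.toGroup.of hf

theorem phi_surj : Function.Surjective phi := by
  rw [← MonoidHom.range_eq_top]
  rw [eq_top_iff, ← Equiv.Perm.closure_isSwap, Subgroup.closure_le]
  rintro σ ⟨x, y, hxy, rfl⟩
  have mem : ∀ w : G, phi w = Equiv.swap x y → Equiv.swap x y ∈ phi.range := fun w hw => ⟨w, hw⟩
  have e0 : phi a = Equiv.swap 0 2 := phi_of 0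
  have e1 : phi b = Equiv.swap 1 2 := phi_of 1
  have e2 : phi c = Equiv.swap 2 3 := phi_of 2
  fin_cases x <;> fin_cases y <;> first
    | exact absurd rfl hxy
    | exact mem a (by rw [e0]; decide)
    | exact mem b (by rw [e1]; decide)
    | exact mem c (by rw [e2]; decide)
    | exact mem (a*(b*a)) (by rw [map_mul, map_mul, e0, e1]; decide)
    | exact mem (a*(c*a)) (by rw [map_mul, map_mul, e0, e2]; decide)
    | exact mem (b*(c*b)) (by rw [map_mul, map_mul, e1, e2]; decide)

theorem phi_bij : Function.Bijective phi := by
  rw [Nat.bijective_iff_surjective_and_card]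
  refine ⟨phi_surj, le_antisymm ?_ ?_⟩
  · calc Nat.card G ≤ 24 := cardG_le
    _ ≤ Nat.card (Equiv.Perm (Fin 4)) := by
        rw [Nat.card_eq_fintype_card]; simp [Fintype.card_perm]; norm_num [Nat.factorial]
  · exact Nat.card_le_card_of_surjective phi phi_surj

theorem presentedGroup_iso_sym4 :
    Nonempty (PresentedGroup rels ≃* Equiv.Perm (Fin 4)) := by
  exact ⟨MulEquiv.ofBijective phi phi_bij⟩

end Stmt2
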